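/- Let a, b : Γ → ℂ be finitely supported functions with supp(a) ⊆ B_n and supp(b) ⊆ B_m, and let a∗b denote their convolution, (a∗b)(g) := Σ_{h∈Γ} a(h)·b(h⁻¹g). Then: ‖(a∗b)·1_{S_0}‖₂ ≤ ‖a‖₂·‖b‖₂; for every integer k with 1 ≤ k ≤ n+m, ‖(a∗b)·1_{S_k}‖₂ ≤ (n+m+1−k)²·‖a‖₂·‖b‖₂; and (a∗b)·1_{S_k} = 0 for every k > n+m. -/

import Mathlib

open MeasureTheory Filter Matrix
open scoped ENNReal ComplexOrder

noncomputable section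

namespace Annealed

abbrev FG (r : ℕ) := FreeGroup (Fin r)

def wlen {r : ℕ} (g : FG r) : ℕ := (FreeGroup.toWord g).length

def l2norm {r : ℕ} (a : MonoidAlgebra ℂ (FG r)) : ℝ :=
  Real.sqrt (∑ g ∈ a.coeff.support, ‖a.coeff g‖ ^ 2)

def l2normSphere {r : ℕ} (a : MonoidAlgebra ℂ (FG r)) (m : ℕ) : ℝ :=
  Real.sqrt (∑ g ∈ a.coeff.support.filter (fun g => wlen g = m), ‖a.coeff g‖ ^ 2)

/-! ### Word combinatorics -/

open FreeGroup List

variable {α : Type*} [DecidableEq α]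

/-- The no-cancellation condition between adjacent letters. -/
def Rc (x y : α × Bool) : Prop := x.1 = y.1 → x.2 = y.2

lemma chain'_reduce (L : List (α × Bool)) : List.Chain' Rc (FreeGroup.reduce L) := by
  induction L with
  | nil => exact List.isChain_nil
  | cons x L ih =>
    rw [FreeGroup.reduce.cons]
    cases h : FreeGroup.reduce L with
    | nil => exact List.isChain_singleton _
    | cons hd tl =>
      rw [h] at ih
      dsimp only
      split_ifs with hc
      · exact ih.tail
      · refine List.isChain_cons_cons.2 ⟨?_, ih⟩
        intro h1
        by_contra h2
        exact hc ⟨h1, by revert h2; cases x.2 <;> cases hd.2 <;> simp⟩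

lemma reduce_eq_self_of_chain' {L : List (α × Bool)} (h : List.Chain' Rc L) :
    FreeGroup.reduce L = L := by
  induction L with
  | nil => rfl
  | cons x L ih =>
    rw [FreeGroup.reduce.cons, ih h.tail]
    cases L with
    | nil => rfl
    | cons hd tl =>
      dsimp only
      rw [if_neg]
      rintro ⟨h1, h2⟩
      have := (List.isChain_cons_cons.1 h).1 h1
      rw [this] at h2
      revert h2; cases hd.2 <;> simp

lemma chain'_toWord (x : FreeGroup α) : List.Chain' Rc x.toWord := by
  have := chain'_reduce (α := α) x.toWord
  rwa [FreeGroup.reduce_toWord] at this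

/-- Key cancellation decomposition for products of reduced words. -/
lemma decomp (w2 w1 : List (α × Bool)) (h2 : List.Chain' Rc w2) (h1 : List.Chain' Rc w1) :
    ∃ p c q, w1 = p ++ c ∧ w2 = FreeGroup.invRev c ++ q ∧
      FreeGroup.reduce (w1 ++ w2) = p ++ q := by
  induction w2 generalizing w1 with
  | nil =>
    exact ⟨w1, [], [], by simp, by simp [FreeGroup.invRev], by
      simpa using reduce_eq_self_of_chain' h1⟩
  | cons y w2' ih =>
    rcases List.eq_nil_or_concat w1 with rfl | ⟨w1', z, rfl⟩
    · exact ⟨[], [], y :: w2', by simp, by simp [FreeGroup.invRev],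
        by simpa using reduce_eq_self_of_chain' h2⟩
    · rw [List.concat_eq_append] at h1 ⊢
      by_cases hz : z = (y.1, !y.2)
      · obtain ⟨p, c, q, e1, e2, e3⟩ := ih w1' h2.tail (h1.prefix ⟨[z], rfl⟩)
        refine ⟨p, c ++ [z], q, by rw [e1, List.append_assoc], ?_, ?_⟩
        · rw [FreeGroup.invRev, List.map_append, List.reverse_append]
          simp only [List.map_cons, List.map_nil, List.reverse_cons, List.reverse_nil,
            List.nil_append]
          rw [hz]
          simp only [Bool.not_not, List.singleton_append, List.cons_append]
          rw [e2, FreeGroup.invRev]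
          simp
        · have hstep : FreeGroup.Red.Step (w1' ++ [z] ++ y :: w2') (w1' ++ w2') := by
            have : w1' ++ [z] ++ y :: w2' = w1' ++ (y.1, !y.2) :: (y.1, !(!y.2)) :: w2' := by
              rw [hz]; simp
            rw [this]
            exact FreeGroup.Red.Step.not
          rw [FreeGroup.reduce.Step.eq hstep, e3]
      · refine ⟨w1' ++ [z], [], y :: w2', by simp, by simp [FreeGroup.invRev], ?_⟩
        have : w1' ++ [z] ++ y :: w2' = (w1' ++ [z]) ++ (y :: w2') := by simp
        rw [this]
        apply reduce_eq_self_of_chain'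
        show List.IsChain Rc _
        rw [List.isChain_append]
        refine ⟨h1, h2, ?_⟩
        intro x hx y' hy'
        simp at hx hy'
        subst hx hy'
        intro hfst
        by_contra hsnd
        apply hz
        ext
        · exact hfst
        · revert hsnd; cases z.2 <;> cases y.2 <;> simp

lemma mul_decomp (x y : FreeGroup α) :
    ∃ p c q, x.toWord = p ++ c ∧ y.toWord = FreeGroup.invRev c ++ q ∧
      (x * y).toWord = p ++ q := by
  obtain ⟨p, c, q, e1, e2, e3⟩ := decomp y.toWord x.toWord (chain'_toWord y) (chain'_toWord x)
  refine ⟨p, c, q, e1, e2, ?_⟩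
  have : x * y = FreeGroup.mk (x.toWord ++ y.toWord) := by
    rw [← FreeGroup.mul_mk, FreeGroup.mk_toWord, FreeGroup.mk_toWord]
  rw [this, FreeGroup.toWord_mk, e3]

/-! ### Analytic part -/

variable {r : ℕ}

lemma wlen_def (g : FG r) : wlen g = g.toWord.length := rfl

lemma wlen_mul_le (x y : FG r) : wlen (x * y) ≤ wlen x + wlen y :=
  FreeGroup.norm_mul_le x y

lemma conv_apply (a b : MonoidAlgebra ℂ (FG r)) (x : FG r) :
    (a * b).coeff x = ∑ h ∈ a.coeff.support, a.coeff h * b.coeff (h⁻¹ * x) := by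
  classical
  rw [MonoidAlgebra.coeff_mul, Finsupp.sum]
  apply Finset.sum_congr rfl
  intro h _
  rw [Finsupp.sum]
  have : ∀ a₂ ∈ b.coeff.support, (if h * a₂ = x then a.coeff h * b.coeff a₂ else 0)
      = if a₂ = h⁻¹ * x then a.coeff h * b.coeff a₂ else 0 := by
    intro a₂ _
    congr 1
    simp [eq_inv_mul_iff_mul_eq]
  rw [Finset.sum_congr rfl this, Finset.sum_ite_eq' b.coeff.support (h⁻¹ * x) (fun a₂ => a.coeff h * b.coeff a₂)]
  split_ifs with hmem
  · rfl
  · rw [Finsupp.notMem_support_iff.1 hmem, mul_zero]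

lemma minkowski {ι κ : Type*} [DecidableEq ι] (Gk : Finset ι) (P : Finset κ) (T : κ → ι → ℂ) :
    Real.sqrt (∑ g ∈ Gk, ‖∑ p ∈ P, T p g‖ ^ 2)
      ≤ ∑ p ∈ P, Real.sqrt (∑ g ∈ Gk, ‖T p g‖ ^ 2) := by
  classical
  let V : κ → EuclideanSpace ℂ {x // x ∈ Gk} := fun p => WithLp.toLp 2 (fun g => T p g.1)
  have hnorm : ∀ v : EuclideanSpace ℂ {x // x ∈ Gk},
      ‖v‖ = Real.sqrt (∑ g ∈ Gk.attach, ‖v g‖ ^ 2) := by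
    intro v
    rw [EuclideanSpace.norm_eq, Finset.univ_eq_attach]
  calc Real.sqrt (∑ g ∈ Gk, ‖∑ p ∈ P, T p g‖ ^ 2) = ‖∑ p ∈ P, V p‖ := by
        rw [hnorm, ← Finset.sum_attach Gk (fun g => ‖∑ p ∈ P, T p g‖ ^ 2)]
        congr 1
        apply Finset.sum_congr rfl
        intro g _
        congr 1
        exact (congrArg Norm.norm ((congrFun (WithLp.ofLp_sum (p := 2) (s := P) (f := V)) g).trans (Finset.sum_apply g P _))).symm
    _ ≤ ∑ p ∈ P, ‖V p‖ := norm_sum_le _ _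
    _ = _ := by
        apply Finset.sum_congr rfl
        intro p _
        rw [hnorm, Finset.sum_attach Gk (fun g => ‖T p g‖ ^ 2)]

/-- The key Haagerup-type sphere estimate for length-homogeneous components. -/
lemma key (s t k j : ℕ) (hst : s + t = k + 2 * j) (a b : MonoidAlgebra ℂ (FG r))
    (Gk : Finset (FG r)) (hGk : ∀ g ∈ Gk, wlen g = k) :
    ∑ g ∈ Gk, ‖∑ h ∈ a.coeff.support.filter (fun h => wlen h = s ∧ wlen (h⁻¹ * g) = t),
        a.coeff h * b.coeff (h⁻¹ * g)‖ ^ 2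
      ≤ (∑ h ∈ a.coeff.support, ‖a.coeff h‖ ^ 2) * (∑ x ∈ b.coeff.support, ‖b.coeff x‖ ^ 2) := by
  classical
  set pf : FG r → List (Fin r × Bool) := fun g => g.toWord.take (s - j) with hpf
  set qf : FG r → List (Fin r × Bool) := fun g => g.toWord.drop (s - j) with hqf
  set X : List (Fin r × Bool) → ℝ := fun p =>
    ∑ h ∈ a.coeff.support.filter (fun h => wlen h = s ∧ h.toWord.take (s - j) = p), ‖a.coeff h‖ ^ 2 with hX
  set Y : List (Fin r × Bool) → ℝ := fun q =>
    ∑ x ∈ b.coeff.support.filter (fun x => wlen x = t ∧ x.toWord.drop j = q), ‖b.coeff x‖ ^ 2 with hY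
  set F : FG r → Finset (FG r) := fun g =>
    a.coeff.support.filter (fun h => wlen h = s ∧ wlen (h⁻¹ * g) = t) with hF
  have claimA : ∀ g ∈ Gk, ∀ h : FG r, wlen h = s → wlen (h⁻¹ * g) = t →
      h.toWord.take (s - j) = pf g ∧ (h⁻¹ * g).toWord.drop j = qf g := by
    intro g hg h hs ht
    obtain ⟨p, c, q, e1, e2, e3⟩ := mul_decomp h (h⁻¹ * g)
    rw [mul_inv_cancel_left] at e3
    have hk : wlen g = k := hGk g hg
    rw [wlen_def, e1, List.length_append] at hs
    rw [wlen_def, e2, List.length_append, FreeGroup.invRev_length] at ht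
    rw [wlen_def, e3, List.length_append] at hk
    have hc : c.length = j := by omega
    have hpl : p.length = s - j := by omega
    constructor
    · rw [e1, List.take_left' hpl, hpf]
      simp only
      rw [e3, List.take_left' hpl]
    · rw [e2, List.drop_left' (by rw [FreeGroup.invRev_length]; exact hc), hqf]
      simp only
      rw [e3, List.drop_left' hpl]
  have Xnn : ∀ p, 0 ≤ X p := fun p => Finset.sum_nonneg fun _ _ => sq_nonneg _
  have Ynn : ∀ q, 0 ≤ Y q := fun q => Finset.sum_nonneg fun _ _ => sq_nonneg _
  have step1 : ∀ g ∈ Gk,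
      ‖∑ h ∈ F g, a.coeff h * b.coeff (h⁻¹ * g)‖ ^ 2 ≤ X (pf g) * Y (qf g) := by
    intro g hg
    have cs : ‖∑ h ∈ F g, a.coeff h * b.coeff (h⁻¹ * g)‖ ^ 2
        ≤ (∑ h ∈ F g, ‖a.coeff h‖ ^ 2) * (∑ h ∈ F g, ‖b.coeff (h⁻¹ * g)‖ ^ 2) := by
      calc ‖∑ h ∈ F g, a.coeff h * b.coeff (h⁻¹ * g)‖ ^ 2
          ≤ (∑ h ∈ F g, ‖a.coeff h‖ * ‖b.coeff (h⁻¹ * g)‖) ^ 2 := by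
            apply pow_le_pow_left₀ (norm_nonneg _)
            refine le_trans (norm_sum_le _ _) ?_
            apply le_of_eq
            apply Finset.sum_congr rfl
            intro h _
            exact norm_mul _ _
        _ ≤ _ := Finset.sum_mul_sq_le_sq_mul_sq _ _ _
    refine le_trans cs (mul_le_mul ?_ ?_ (Finset.sum_nonneg fun _ _ => sq_nonneg _) (Xnn _))
    · apply Finset.sum_le_sum_of_subset_of_nonneg
      · intro h hh
        rw [hF] at hh
        simp only [Finset.mem_filter] at hh ⊢
        exact ⟨hh.1, hh.2.1, (claimA g hg h hh.2.1 hh.2.2).1⟩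
      · intro _ _ _; exact sq_nonneg _
    · have hcond : ∀ h ∈ F g, ‖b.coeff (h⁻¹ * g)‖ ^ 2 ≠ 0 → h⁻¹ * g ∈ b.coeff.support := by
        intro h _ hne
        by_contra hmem
        exact hne (by rw [Finsupp.notMem_support_iff.1 hmem]; simp)
      rw [← Finset.sum_filter_of_ne hcond]
      have e1 : ∑ h ∈ (F g).filter (fun h => h⁻¹ * g ∈ b.coeff.support), ‖b.coeff (h⁻¹ * g)‖ ^ 2
          = ∑ x ∈ ((F g).filter (fun h => h⁻¹ * g ∈ b.coeff.support)).image (fun h => h⁻¹ * g),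
              ‖b.coeff x‖ ^ 2 := by
        rw [Finset.sum_image]
        intro x _ y _ e
        have : x⁻¹ = y⁻¹ := mul_right_cancel e
        exact inv_injective this
      rw [e1]
      apply Finset.sum_le_sum_of_subset_of_nonneg
      · intro x hx
        simp only [Finset.mem_image, Finset.mem_filter] at hx
        obtain ⟨h, ⟨hhF, hmem⟩, rfl⟩ := hx
        rw [hF] at hhF
        simp only [Finset.mem_filter] at hhF ⊢
        exact ⟨hmem, hhF.2.2, (claimA g hg h hhF.2.1 hhF.2.2).2⟩
      · intro _ _ _; exact sq_nonneg _
  have hinj : Set.InjOn (fun g => (pf g, qf g)) Gk := by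
    intro g hg g' hg' e
    simp only [Prod.mk.injEq] at e
    apply FreeGroup.toWord_injective
    rw [← List.take_append_drop (s - j) g.toWord, ← List.take_append_drop (s - j) g'.toWord]
    rw [show g.toWord.take (s-j) = pf g from rfl, show g.toWord.drop (s-j) = qf g from rfl,
      show g'.toWord.take (s-j) = pf g' from rfl, show g'.toWord.drop (s-j) = qf g' from rfl,
      e.1, e.2]
  have step3 : ∑ g ∈ Gk, X (pf g) * Y (qf g)
      ≤ (∑ h ∈ a.coeff.support, ‖a.coeff h‖ ^ 2) * (∑ x ∈ b.coeff.support, ‖b.coeff x‖ ^ 2) := by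
    have e1 : ∑ g ∈ Gk, X (pf g) * Y (qf g)
        = ∑ z ∈ Gk.image (fun g => (pf g, qf g)), X z.1 * Y z.2 := by
      rw [Finset.sum_image (fun x hx y hy e => hinj hx hy e)]
    rw [e1]
    have sub : Gk.image (fun g => (pf g, qf g)) ⊆ (Gk.image pf) ×ˢ (Gk.image qf) := by
      intro z hz
      simp only [Finset.mem_image, Finset.mem_product] at hz ⊢
      obtain ⟨g, hg, rfl⟩ := hz
      exact ⟨⟨g, hg, rfl⟩, ⟨g, hg, rfl⟩⟩
    refine le_trans (Finset.sum_le_sum_of_subset_of_nonneg sub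
      (fun z _ _ => mul_nonneg (Xnn _) (Ynn _))) ?_
    rw [Finset.sum_product]
    have e2 : ∑ p ∈ Gk.image pf, ∑ q ∈ Gk.image qf, X p * Y q
        = (∑ p ∈ Gk.image pf, X p) * (∑ q ∈ Gk.image qf, Y q) := by
      rw [Finset.sum_mul_sum]
    rw [e2]
    have bX : ∑ p ∈ Gk.image pf, X p ≤ ∑ h ∈ a.coeff.support, ‖a.coeff h‖ ^ 2 := by
      set S0 := a.coeff.support.filter
        (fun h => wlen h = s ∧ h.toWord.take (s - j) ∈ Gk.image pf) with hS0
      have e3 : ∑ p ∈ Gk.image pf, X p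
          = ∑ p ∈ Gk.image pf, ∑ h ∈ S0.filter (fun h => h.toWord.take (s - j) = p),
              ‖a.coeff h‖ ^ 2 := by
        apply Finset.sum_congr rfl
        intro p hp
        simp only [hX]
        congr 1
        rw [hS0, Finset.filter_filter]
        apply Finset.filter_congr
        intro h _
        constructor
        · rintro ⟨h1, h2⟩; exact ⟨⟨h1, h2 ▸ hp⟩, h2⟩
        · rintro ⟨⟨h1, _⟩, h2⟩; exact ⟨h1, h2⟩
      rw [e3, Finset.sum_fiberwise_of_maps_to (fun h hh => (Finset.mem_filter.1 hh).2.2)]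
      exact Finset.sum_le_sum_of_subset_of_nonneg (Finset.filter_subset _ _)
        (fun _ _ _ => sq_nonneg _)
    have bY : ∑ q ∈ Gk.image qf, Y q ≤ ∑ x ∈ b.coeff.support, ‖b.coeff x‖ ^ 2 := by
      set S0 := b.coeff.support.filter
        (fun x => wlen x = t ∧ x.toWord.drop j ∈ Gk.image qf) with hS0
      have e3 : ∑ q ∈ Gk.image qf, Y q
          = ∑ q ∈ Gk.image qf, ∑ x ∈ S0.filter (fun x => x.toWord.drop j = q),
              ‖b.coeff x‖ ^ 2 := by
        apply Finset.sum_congr rfl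
        intro q hq
        simp only [hY]
        congr 1
        rw [hS0, Finset.filter_filter]
        apply Finset.filter_congr
        intro x _
        constructor
        · rintro ⟨h1, h2⟩; exact ⟨⟨h1, h2 ▸ hq⟩, h2⟩
        · rintro ⟨⟨h1, _⟩, h2⟩; exact ⟨h1, h2⟩
      rw [e3, Finset.sum_fiberwise_of_maps_to (fun x hx => (Finset.mem_filter.1 hx).2.2)]
      exact Finset.sum_le_sum_of_subset_of_nonneg (Finset.filter_subset _ _)
        (fun _ _ _ => sq_nonneg _)
    exact mul_le_mul bX bY (Finset.sum_nonneg fun _ _ => Ynn _) (Finset.sum_nonneg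
      fun _ _ => sq_nonneg _)
  exact le_trans (Finset.sum_le_sum step1) step3


lemma sum_b_le (b : MonoidAlgebra ℂ (FG r)) (g : FG r) (s : Finset (FG r)) :
    ∑ h ∈ s, ‖b.coeff (h⁻¹ * g)‖ ^ 2 ≤ ∑ x ∈ b.coeff.support, ‖b.coeff x‖ ^ 2 := by
  classical
  have hcond : ∀ h ∈ s, ‖b.coeff (h⁻¹ * g)‖ ^ 2 ≠ 0 → h⁻¹ * g ∈ b.coeff.support := by
    intro h _ hne
    by_contra hmem
    exact hne (by rw [Finsupp.notMem_support_iff.1 hmem]; simp)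
  rw [← Finset.sum_filter_of_ne hcond]
  have e1 : ∑ h ∈ s.filter (fun h => h⁻¹ * g ∈ b.coeff.support), ‖b.coeff (h⁻¹ * g)‖ ^ 2
      = ∑ x ∈ (s.filter (fun h => h⁻¹ * g ∈ b.coeff.support)).image (fun h => h⁻¹ * g),
          ‖b.coeff x‖ ^ 2 := by
    rw [Finset.sum_image]
    intro x _ y _ e
    exact inv_injective (mul_right_cancel e)
  rw [e1]
  apply Finset.sum_le_sum_of_subset_of_nonneg
  · intro x hx
    simp only [Finset.mem_image, Finset.mem_filter] at hx
    obtain ⟨h, ⟨_, hmem⟩, rfl⟩ := hx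
    exact hmem
  · intro _ _ _; exact sq_nonneg _

theorem statement16 (r : ℕ) (hr : 1 ≤ r) (n m : ℕ)
    (a b : MonoidAlgebra ℂ (FG r))
    (hsa : ∀ g ∈ a.coeff.support, wlen g ≤ n) (hsb : ∀ g ∈ b.coeff.support, wlen g ≤ m) :
    l2normSphere (a * b) 0 ≤ l2norm a * l2norm b ∧
      (∀ kk : ℕ, 1 ≤ kk → kk ≤ n + m →
        l2normSphere (a * b) kk ≤ ((n : ℝ) + (m : ℝ) + 1 - (kk : ℝ)) ^ 2 * (l2norm a * l2norm b)) ∧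
      ∀ g : FG r, n + m < wlen g → (a * b).coeff g = 0 := by
  classical
  have hCnn : 0 ≤ l2norm a * l2norm b :=
    mul_nonneg (Real.sqrt_nonneg _) (Real.sqrt_nonneg _)
  have habS : 0 ≤ (∑ h ∈ a.coeff.support, ‖a.coeff h‖ ^ 2) := Finset.sum_nonneg fun _ _ => sq_nonneg _
  have hsqrtAB : Real.sqrt ((∑ h ∈ a.coeff.support, ‖a.coeff h‖ ^ 2) * (∑ x ∈ b.coeff.support, ‖b.coeff x‖ ^ 2))
      = l2norm a * l2norm b := by
    rw [Real.sqrt_mul habS]; rfl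
  refine ⟨?_, ?_, ?_⟩
  · -- k = 0
    have h1 : (a * b).coeff.support.filter (fun g => wlen g = 0) ⊆ {(1 : FG r)} := by
      intro g hg
      simp only [Finset.mem_filter] at hg
      have : g.toWord = [] := List.length_eq_zero_iff.1 hg.2
      simp [FreeGroup.toWord_eq_nil_iff.1 this]
    have h2 : ∑ g ∈ (a * b).coeff.support.filter (fun g => wlen g = 0), ‖(a * b).coeff g‖ ^ 2
        ≤ ‖(a * b).coeff 1‖ ^ 2 := by
      refine le_trans (Finset.sum_le_sum_of_subset_of_nonneg h1
        (fun _ _ _ => sq_nonneg _)) ?_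
      simp
    have h3 : ‖(a * b).coeff 1‖ ^ 2
        ≤ (∑ h ∈ a.coeff.support, ‖a.coeff h‖ ^ 2) * (∑ x ∈ b.coeff.support, ‖b.coeff x‖ ^ 2) := by
      rw [conv_apply]
      calc ‖∑ h ∈ a.coeff.support, a.coeff h * b.coeff (h⁻¹ * 1)‖ ^ 2
          ≤ (∑ h ∈ a.coeff.support, ‖a.coeff h‖ * ‖b.coeff (h⁻¹ * 1)‖) ^ 2 := by
            apply pow_le_pow_left₀ (norm_nonneg _)
            refine le_trans (norm_sum_le _ _) (le_of_eq ?_)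
            exact Finset.sum_congr rfl fun h _ => norm_mul _ _
        _ ≤ (∑ h ∈ a.coeff.support, ‖a.coeff h‖ ^ 2) * (∑ h ∈ a.coeff.support, ‖b.coeff (h⁻¹ * 1)‖ ^ 2) :=
            Finset.sum_mul_sq_le_sq_mul_sq _ _ _
        _ ≤ _ := by
            apply mul_le_mul_of_nonneg_left (sum_b_le b 1 a.coeff.support) habS
    rw [← hsqrtAB]
    exact Real.sqrt_le_sqrt (le_trans h2 h3)
  · -- 1 ≤ kk ≤ n + m
    intro kk hk1 hk2
    set P : Finset (ℕ × ℕ) :=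
      ((Finset.range (n+1)) ×ˢ (Finset.range (m+1))).filter (fun z => kk ≤ z.1 + z.2) with hP
    set Gk := (a * b).coeff.support.filter (fun g => wlen g = kk) with hGkdef
    have hGk : ∀ g ∈ Gk, wlen g = kk := fun g hg => (Finset.mem_filter.1 hg).2
    set T : ℕ × ℕ → FG r → ℂ := fun z g =>
      ∑ h ∈ a.coeff.support.filter (fun h => wlen h = z.1 ∧ wlen (h⁻¹ * g) = z.2),
        a.coeff h * b.coeff (h⁻¹ * g) with hT
    have hsplit : ∀ g ∈ Gk, (a * b).coeff g = ∑ z ∈ P, T z g := by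
      intro g hg
      have hgk : wlen g = kk := hGk g hg
      rw [conv_apply]
      have hcond : ∀ h ∈ a.coeff.support, a.coeff h * b.coeff (h⁻¹ * g) ≠ 0 →
          (wlen h, wlen (h⁻¹ * g)) ∈ P := by
        intro h hh hne
        have hbne : b.coeff (h⁻¹ * g) ≠ 0 := fun h0 => hne (by rw [h0, mul_zero])
        have h1 : wlen h ≤ n := hsa h hh
        have h2 : wlen (h⁻¹ * g) ≤ m := hsb _ (Finsupp.mem_support_iff.2 hbne)
        have h3 : wlen g ≤ wlen h + wlen (h⁻¹ * g) := by
          have := wlen_mul_le h (h⁻¹ * g)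
          rwa [mul_inv_cancel_left] at this
        simp only [hP, Finset.mem_filter, Finset.mem_product, Finset.mem_range]
        omega
      rw [← Finset.sum_filter_of_ne hcond,
        ← Finset.sum_fiberwise_of_maps_to (fun h hh => (Finset.mem_filter.1 hh).2)
          (fun h => a.coeff h * b.coeff (h⁻¹ * g))]
      apply Finset.sum_congr rfl
      intro z hz
      simp only [hT]
      congr 1
      rw [Finset.filter_filter]
      apply Finset.filter_congr
      intro h _
      constructor
      · rintro ⟨_, he⟩
        exact ⟨congrArg Prod.fst he, congrArg Prod.snd he⟩
      · rintro ⟨h1, h2⟩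
        have he : (wlen h, wlen (h⁻¹ * g)) = z := Prod.ext h1 h2
        exact ⟨he ▸ hz, he⟩
    have hmain : l2normSphere (a * b) kk
        ≤ ∑ z ∈ P, Real.sqrt (∑ g ∈ Gk, ‖T z g‖ ^ 2) := by
      have : l2normSphere (a * b) kk = Real.sqrt (∑ g ∈ Gk, ‖∑ z ∈ P, T z g‖ ^ 2) := by
        unfold l2normSphere
        congr 1
        exact Finset.sum_congr rfl fun g hg => by rw [hsplit g hg]
      rw [this]
      exact minkowski Gk P T
    have hterm : ∀ z ∈ P, Real.sqrt (∑ g ∈ Gk, ‖T z g‖ ^ 2) ≤ l2norm a * l2norm b := by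
      rintro ⟨s, t⟩ hzP
      by_cases hw : ∃ g ∈ Gk, ∃ h ∈ a.coeff.support, wlen h = s ∧ wlen (h⁻¹ * g) = t
      · obtain ⟨g, hg, h, _, hs, ht⟩ := hw
        obtain ⟨p, c, q, e1, e2, e3⟩ := mul_decomp h (h⁻¹ * g)
        rw [mul_inv_cancel_left] at e3
        have hgk : wlen g = kk := hGk g hg
        rw [wlen_def, e1, List.length_append] at hs
        rw [wlen_def, e2, List.length_append, FreeGroup.invRev_length] at ht
        rw [wlen_def, e3, List.length_append] at hgk
        have hst : s + t = kk + 2 * c.length := by omega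
        have := key s t kk c.length hst a b Gk hGk
        rw [← hsqrtAB]
        exact Real.sqrt_le_sqrt this
      · push_neg at hw
        have : ∀ g ∈ Gk, T (s, t) g = 0 := by
          intro g hg
          simp only [hT]
          apply Finset.sum_eq_zero
          intro h hh
          simp only [Finset.mem_filter] at hh
          exact absurd hh.2.2 (hw g hg h hh.1 hh.2.1)
        have hz : ∑ g ∈ Gk, ‖T (s, t) g‖ ^ 2 = 0 :=
          Finset.sum_eq_zero fun g hg => by rw [this g hg]; simp
        rw [hz, Real.sqrt_zero]
        exact hCnn
    have hcard : P.card ≤ (n + m + 1 - kk) * (n + m + 1 - kk) := by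
      have hsub : P ⊆ (Finset.Icc (kk - m) n) ×ˢ (Finset.Icc (kk - n) m) := by
        intro z hzP
        simp only [hP, Finset.mem_filter, Finset.mem_product, Finset.mem_range,
          Finset.mem_Icc] at hzP ⊢
        omega
      refine le_trans (Finset.card_le_card hsub) ?_
      rw [Finset.card_product, Nat.card_Icc, Nat.card_Icc]
      exact Nat.mul_le_mul (by omega) (by omega)
    have hcast : ((n + m + 1 - kk : ℕ) : ℝ) = (n : ℝ) + (m : ℝ) + 1 - (kk : ℝ) := by
      rw [Nat.cast_sub (by omega)]
      push_cast
      ring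
    calc l2normSphere (a * b) kk ≤ ∑ z ∈ P, Real.sqrt (∑ g ∈ Gk, ‖T z g‖ ^ 2) := hmain
      _ ≤ ∑ _z ∈ P, l2norm a * l2norm b := Finset.sum_le_sum hterm
      _ = (P.card : ℝ) * (l2norm a * l2norm b) := by
          rw [Finset.sum_const, nsmul_eq_mul]
      _ ≤ ((n : ℝ) + (m : ℝ) + 1 - (kk : ℝ)) ^ 2 * (l2norm a * l2norm b) := by
          apply mul_le_mul_of_nonneg_right _ hCnn
          calc (P.card : ℝ) ≤ (((n + m + 1 - kk) * (n + m + 1 - kk) : ℕ) : ℝ) :=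
                Nat.cast_le.2 hcard
            _ = ((n : ℝ) + (m : ℝ) + 1 - (kk : ℝ)) ^ 2 := by
                rw [Nat.cast_mul, hcast, sq]
  · -- vanishing beyond radius n + m
    intro g hg
    rw [conv_apply]
    apply Finset.sum_eq_zero
    intro h hh
    by_cases hb : h⁻¹ * g ∈ b.coeff.support
    · have h1 : wlen h ≤ n := hsa h hh
      have h2 : wlen (h⁻¹ * g) ≤ m := hsb _ hb
      have h3 : wlen g ≤ wlen h + wlen (h⁻¹ * g) := by
        have := wlen_mul_le h (h⁻¹ * g)
        rwa [mul_inv_cancel_left] at this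
      exact absurd hg (by omega)
    · rw [Finsupp.notMem_support_iff.1 hb, mul_zero]

end Annealed
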